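/- Let σ^{(1)},…,σ^{(2n)} ∈ {-1,1}^N and define Q_{2n} = ∑_{l=1}^{n} ∑_{r_1 < ⋯ < r_{2l}} q_{r_1⋯r_{2l}}, where the inner sum runs over all subsets {r_1,…,r_{2l}} ⊆ {1,…,2n} of even cardinality 2l, and q_{r_1⋯r_{2l}} = (1/N)∑_{i=1}^N σ^{(r_1)}_i ⋯ σ^{(r_{2l})}_i. Then 1 + Q_{2n} = (1/N) ∑_{i=1}^N ∏_{a=1}^{2n} (1 + σ^{(a)}_i)/2 · 2^{2n-1} + (1/N) ∑_{i=1}^N ∏_{a=1}^{2n} (1 - σ^{(a)}_i)/2 · 2^{2n-1}, and in particular 0 ≤ 1 + Q_{2n} ≤ 2^{2n-1}. -/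

import Mathlib

open Finset

lemma even_sum_eq (m : ℕ) (x : Fin m → ℝ) :
    ∑ S ∈ Finset.univ.powerset.filter (fun S : Finset (Fin m) => Even S.card),
        ∏ a ∈ S, x a
      = (∏ a, (1 + x a) + ∏ a, (1 - x a)) / 2 := by
  have h1 : ∏ a, (1 + x a) = ∑ S ∈ (Finset.univ : Finset (Fin m)).powerset, ∏ a ∈ S, x a := by
    simp only [show (fun a => 1 + x a) = (fun a => x a + 1) from funext fun a => add_comm _ _]
    rw [show (∏ a, (x a + 1)) = ∏ a ∈ Finset.univ, (x a + (fun _ : Fin m => (1:ℝ)) a) from rfl,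
      Finset.prod_add]
    simp
  have h2 : ∏ a, (1 - x a)
      = ∑ S ∈ (Finset.univ : Finset (Fin m)).powerset, (-1) ^ S.card * ∏ a ∈ S, x a := by
    have : ∏ a, (1 - x a) = ∏ a ∈ Finset.univ, ((-x a) + 1) := by
      apply Finset.prod_congr rfl; intro a _; ring
    rw [this, show (∏ a ∈ Finset.univ, ((-x a) + 1))
        = ∏ a ∈ Finset.univ, ((fun a => -x a) a + (fun _ : Fin m => (1:ℝ)) a) from rfl,
      Finset.prod_add]
    refine Finset.sum_congr rfl fun S _ => ?_
    rw [show (∏ i ∈ S, -x i) = ∏ i ∈ S, (-1) * x i from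
      Finset.prod_congr rfl fun i _ => (neg_eq_neg_one_mul _),
      Finset.prod_mul_distrib, Finset.prod_const]
    simp
  rw [h1, h2, ← Finset.sum_add_distrib]
  rw [← Finset.sum_filter_add_sum_filter_not (Finset.univ.powerset)
    (fun S : Finset (Fin m) => Even S.card)
    (fun S => (∏ a ∈ S, x a + (-1) ^ S.card * ∏ a ∈ S, x a))]
  have hA : ∑ S ∈ Finset.univ.powerset.filter (fun S : Finset (Fin m) => Even S.card),
      (∏ a ∈ S, x a + (-1) ^ S.card * ∏ a ∈ S, x a)
      = ∑ S ∈ Finset.univ.powerset.filter (fun S : Finset (Fin m) => Even S.card),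
        2 * ∏ a ∈ S, x a := by
    refine Finset.sum_congr rfl fun S hS => ?_
    have h := (Finset.mem_filter.mp hS).2
    rw [h.neg_one_pow]; ring
  have hB : ∑ S ∈ Finset.univ.powerset.filter (fun S : Finset (Fin m) => ¬ Even S.card),
      (∏ a ∈ S, x a + (-1) ^ S.card * ∏ a ∈ S, x a) = 0 := by
    refine Finset.sum_eq_zero fun S hS => ?_
    have h := (Finset.mem_filter.mp hS).2
    rw [(Nat.not_even_iff_odd.mp h).neg_one_pow]; ring
  rw [hA, hB, add_zero, ← Finset.mul_sum]
  ring

theorem one_add_Q_representation (N n : ℕ) (hN : 1 ≤ N) (hn : 1 ≤ n)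
    (σ : Fin (2 * n) → Fin N → ℝ) (hσ : ∀ a i, σ a i = 1 ∨ σ a i = -1) :
    (1 + ∑ S ∈ Finset.univ.powerset.filter
          (fun S : Finset (Fin (2 * n)) => S.Nonempty ∧ Even S.card),
        (1 / (N : ℝ)) * ∑ i : Fin N, ∏ a ∈ S, σ a i)
      = (1 / (N : ℝ)) * ∑ i : Fin N,
          (2 ^ (2 * n - 1) * ∏ a : Fin (2 * n), (1 + σ a i) / 2
            + 2 ^ (2 * n - 1) * ∏ a : Fin (2 * n), (1 - σ a i) / 2)
    ∧ 0 ≤ 1 + ∑ S ∈ Finset.univ.powerset.filter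
          (fun S : Finset (Fin (2 * n)) => S.Nonempty ∧ Even S.card),
        (1 / (N : ℝ)) * ∑ i : Fin N, ∏ a ∈ S, σ a i
    ∧ 1 + ∑ S ∈ Finset.univ.powerset.filter
          (fun S : Finset (Fin (2 * n)) => S.Nonempty ∧ Even S.card),
        (1 / (N : ℝ)) * ∑ i : Fin N, ∏ a ∈ S, σ a i ≤ 2 ^ (2 * n - 1) := by
  have hNpos : (0:ℝ) < N := by exact_mod_cast hN
  have hmpos : 0 < 2 * n := by omega
  -- per-site identity
  have key : ∀ i : Fin N,
      2 ^ (2 * n - 1) * ∏ a : Fin (2 * n), (1 + σ a i) / 2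
        + 2 ^ (2 * n - 1) * ∏ a : Fin (2 * n), (1 - σ a i) / 2
      = 1 + ∑ S ∈ Finset.univ.powerset.filter
          (fun S : Finset (Fin (2 * n)) => S.Nonempty ∧ Even S.card),
          ∏ a ∈ S, σ a i := by
    intro i
    have hp : (∏ a : Fin (2 * n), (1 + σ a i) / 2)
        = (∏ a : Fin (2 * n), (1 + σ a i)) / 2 ^ (2 * n) := by
      rw [Finset.prod_div_distrib]; simp
    have hq : (∏ a : Fin (2 * n), (1 - σ a i) / 2)
        = (∏ a : Fin (2 * n), (1 - σ a i)) / 2 ^ (2 * n) := by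
      rw [Finset.prod_div_distrib]; simp
    have h2 : (2:ℝ) ^ (2 * n) = 2 ^ (2 * n - 1) * 2 := by
      rw [← pow_succ]; congr 1; omega
    have hsplit :
        ∑ S ∈ Finset.univ.powerset.filter (fun S : Finset (Fin (2 * n)) => Even S.card),
          ∏ a ∈ S, σ a i
        = 1 + ∑ S ∈ Finset.univ.powerset.filter
            (fun S : Finset (Fin (2 * n)) => S.Nonempty ∧ Even S.card),
            ∏ a ∈ S, σ a i := by
      have hins : Finset.univ.powerset.filter
            (fun S : Finset (Fin (2 * n)) => Even S.card)
          = insert (∅ : Finset (Fin (2 * n)))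
            (Finset.univ.powerset.filter
              (fun S : Finset (Fin (2 * n)) => S.Nonempty ∧ Even S.card)) := by
        ext S
        simp only [Finset.mem_insert, Finset.mem_filter, Finset.mem_powerset]
        constructor
        · rintro ⟨hs, he⟩
          rcases S.eq_empty_or_nonempty with rfl | hne
          · exact Or.inl rfl
          · exact Or.inr ⟨hs, hne, he⟩
        · rintro (rfl | ⟨hs, _, he⟩)
          · simp
          · exact ⟨hs, he⟩
      rw [hins, Finset.sum_insert (by simp)]
      simp
    have := even_sum_eq (2 * n) (fun a => σ a i)
    rw [hsplit] at this
    rw [hp, hq, h2, this]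
    have h2p : (0:ℝ) < 2 ^ (2 * n - 1) := by positivity
    field_simp
  -- per-site bounds
  have bound : ∀ i : Fin N,
      0 ≤ 2 ^ (2 * n - 1) * ∏ a : Fin (2 * n), (1 + σ a i) / 2
        + 2 ^ (2 * n - 1) * ∏ a : Fin (2 * n), (1 - σ a i) / 2
      ∧ 2 ^ (2 * n - 1) * ∏ a : Fin (2 * n), (1 + σ a i) / 2
        + 2 ^ (2 * n - 1) * ∏ a : Fin (2 * n), (1 - σ a i) / 2 ≤ 2 ^ (2 * n - 1) := by
    intro i
    have hf : ∀ a : Fin (2 * n), (1 + σ a i) / 2 = 0 ∨ (1 + σ a i) / 2 = 1 := by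
      intro a; rcases hσ a i with h | h <;> simp [h] <;> norm_num
    have hg : ∀ a : Fin (2 * n), (1 - σ a i) / 2 = 0 ∨ (1 - σ a i) / 2 = 1 := by
      intro a; rcases hσ a i with h | h <;> simp [h] <;> norm_num
    have hp0 : 0 ≤ ∏ a : Fin (2 * n), (1 + σ a i) / 2 :=
      Finset.prod_nonneg fun a _ => by rcases hf a with h | h <;> simp [h]
    have hq0 : 0 ≤ ∏ a : Fin (2 * n), (1 - σ a i) / 2 :=
      Finset.prod_nonneg fun a _ => by rcases hg a with h | h <;> simp [h]
    have hp1 : ∏ a : Fin (2 * n), (1 + σ a i) / 2 ≤ 1 :=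
      Finset.prod_le_one (fun a _ => by rcases hf a with h | h <;> simp [h])
        (fun a _ => by rcases hf a with h | h <;> simp [h])
    have hq1 : ∏ a : Fin (2 * n), (1 - σ a i) / 2 ≤ 1 :=
      Finset.prod_le_one (fun a _ => by rcases hg a with h | h <;> simp [h])
        (fun a _ => by rcases hg a with h | h <;> simp [h])
    have hsum : ∏ a : Fin (2 * n), (1 + σ a i) / 2
        + ∏ a : Fin (2 * n), (1 - σ a i) / 2 ≤ 1 := by
      by_cases hall : ∀ a : Fin (2 * n), σ a i = 1
      · have : ∏ a : Fin (2 * n), (1 - σ a i) / 2 = 0 := by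
          apply Finset.prod_eq_zero (Finset.mem_univ ⟨0, hmpos⟩)
          rw [hall ⟨0, hmpos⟩]; norm_num
        rw [this, add_zero]; exact hp1
      · push_neg at hall
        obtain ⟨a, ha⟩ := hall
        have hσa : σ a i = -1 := (hσ a i).resolve_left ha
        have : ∏ b : Fin (2 * n), (1 + σ b i) / 2 = 0 := by
          apply Finset.prod_eq_zero (Finset.mem_univ a)
          rw [hσa]; norm_num
        rw [this, zero_add]; exact hq1
    constructor
    · positivity
    · have h2p : (0:ℝ) < 2 ^ (2 * n - 1) := by positivity
      calc 2 ^ (2 * n - 1) * ∏ a : Fin (2 * n), (1 + σ a i) / 2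
            + 2 ^ (2 * n - 1) * ∏ a : Fin (2 * n), (1 - σ a i) / 2
          = 2 ^ (2 * n - 1) * (∏ a : Fin (2 * n), (1 + σ a i) / 2
            + ∏ a : Fin (2 * n), (1 - σ a i) / 2) := by ring
        _ ≤ 2 ^ (2 * n - 1) * 1 := by
            exact mul_le_mul_of_nonneg_left hsum h2p.le
        _ = 2 ^ (2 * n - 1) := mul_one _
  -- main equality
  have heq : (1 + ∑ S ∈ Finset.univ.powerset.filter
          (fun S : Finset (Fin (2 * n)) => S.Nonempty ∧ Even S.card),
        (1 / (N : ℝ)) * ∑ i : Fin N, ∏ a ∈ S, σ a i)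
      = (1 / (N : ℝ)) * ∑ i : Fin N,
          (2 ^ (2 * n - 1) * ∏ a : Fin (2 * n), (1 + σ a i) / 2
            + 2 ^ (2 * n - 1) * ∏ a : Fin (2 * n), (1 - σ a i) / 2) := by
    rw [Finset.sum_congr rfl (fun i _ => key i), Finset.sum_add_distrib,
      Finset.sum_const, Finset.card_univ, Fintype.card_fin, mul_add, nsmul_eq_mul,
      mul_one, one_div, inv_mul_cancel₀ (ne_of_gt hNpos)]
    congr 1
    rw [← Finset.mul_sum, Finset.sum_comm]
  refine ⟨heq, ?_, ?_⟩
  · rw [heq]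
    apply mul_nonneg (by positivity)
    exact Finset.sum_nonneg fun i _ => (bound i).1
  · rw [heq]
    calc (1 / (N : ℝ)) * ∑ i : Fin N,
          (2 ^ (2 * n - 1) * ∏ a : Fin (2 * n), (1 + σ a i) / 2
            + 2 ^ (2 * n - 1) * ∏ a : Fin (2 * n), (1 - σ a i) / 2)
        ≤ (1 / (N : ℝ)) * ∑ _i : Fin N, (2:ℝ) ^ (2 * n - 1) := by
          apply mul_le_mul_of_nonneg_left _ (by positivity)
          exact Finset.sum_le_sum fun i _ => (bound i).2
      _ = 2 ^ (2 * n - 1) := by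
          rw [Finset.sum_const, Finset.card_univ, Fintype.card_fin, nsmul_eq_mul]
          field_simp
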